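/- Let m be a positive integer. For every positive integer n with n > (L_{2m} + F_{2m}² + 1)³, if σ₂(n) − n² = L_{2m}·n + F_{2m}² + 1 (as integers), then either there exists an integer k ≥ 0 such that n = F_{2k} · F_{2k+2m} with both F_{2k} and F_{2k+2m} prime, or there exists an integer k with 0 ≤ k < m and m ≠ 2k such that n = F_{2k} · F_{2m−2k} with both F_{2k} and F_{2m−2k} prime. -/

import Mathlib

/-- The Lucas numbers: `L 0 = 2`, `L 1 = 1`, `L (n+2) = L (n+1) + L n`. -/
def lucasNum : ℕ → ℕ
  | 0 => 2
  | 1 => 1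
  | n + 2 => lucasNum (n + 1) + lucasNum n

lemma lucas_add_two (n : ℕ) : lucasNum (n+2) = lucasNum (n+1) + lucasNum n := rfl

lemma lucas_add_fib : ∀ n, lucasNum n + Nat.fib n = 2 * Nat.fib (n+1) := by
  intro n
  induction n using Nat.twoStepInduction with
  | zero => simp [lucasNum]
  | one => simp [lucasNum]
  | more n ih1 ih2 =>
    rw [lucas_add_two, Nat.fib_add_two, Nat.fib_add_two (n := n+1)]
    omega

lemma lucas_pos (n : ℕ) : 0 < lucasNum n := by
  induction n using Nat.twoStepInduction with
  | zero => simp [lucasNum]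
  | one => simp [lucasNum]
  | more n ih1 ih2 => rw [lucas_add_two]; omega

lemma lucas_even_ge_two (j : ℕ) : 2 ≤ lucasNum (2*j) := by
  induction j with
  | zero => simp [lucasNum]
  | succ j ih =>
    have h1 := lucas_pos (2*j+1)
    have : 2*(j+1) = (2*j)+2 := by ring
    rw [this, lucas_add_two]; omega

lemma lucas_even_ge_three {m : ℕ} (hm : 1 ≤ m) : 3 ≤ lucasNum (2*m) := by
  obtain ⟨j, rfl⟩ : ∃ j, m = j + 1 := ⟨m - 1, by omega⟩
  have h1 := lucas_pos (2*j+1)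
  have h2 := lucas_even_ge_two j
  have : 2*(j+1) = (2*j)+2 := by ring
  rw [this, lucas_add_two]; omega

-- Cassini-style
lemma cassini : ∀ n : ℕ, (Nat.fib (n+1) : ℤ)^2 = Nat.fib (n+1) * Nat.fib n + (Nat.fib n)^2 + (-1)^n := by
  intro n
  induction n with
  | zero => simp
  | succ n ih =>
    have h : (Nat.fib (n+2) : ℤ) = Nat.fib n + Nat.fib (n+1) := by
      rw [Nat.fib_add_two]; push_cast; ring
    rw [h]; push_cast [pow_succ]
    nlinarith [ih]

lemma lucas_sq_even (s : ℕ) : (lucasNum (2*s) : ℤ)^2 = 5 * (Nat.fib (2*s) : ℤ)^2 + 4 := by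
  have h1 : (lucasNum (2*s) : ℤ) + Nat.fib (2*s) = 2 * Nat.fib (2*s+1) := by
    exact_mod_cast congrArg (Nat.cast : ℕ → ℤ) (lucas_add_fib (2*s))
  have h2 := cassini (2*s)
  rw [show ((-1:ℤ))^(2*s) = 1 by rw [pow_mul]; norm_num] at h2
  nlinarith [h1, h2]
-- d'Ocagne style subtraction identity over ℤ
lemma fib_sub (c : ℕ) : ∀ a : ℕ, (Nat.fib (a+c) : ℤ) * Nat.fib (a+1) =
    Nat.fib (a+c+1) * Nat.fib a + (-1)^a * Nat.fib c := by
  intro a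
  induction a with
  | zero => simp
  | succ a ih =>
    have e1 : a+1+c = a+c+1 := by ring
    have e2 : (Nat.fib (a+2) : ℤ) = Nat.fib a + Nat.fib (a+1) := by
      rw [Nat.fib_add_two]; push_cast; ring
    have e3 : (Nat.fib (a+c+2) : ℤ) = Nat.fib (a+c) + Nat.fib (a+c+1) := by
      rw [Nat.fib_add_two]; push_cast; ring
    rw [show a+1+1 = a+2 from rfl, e1, show a+c+1+1 = a+c+2 from rfl, e2, e3]
    push_cast [pow_succ]
    nlinarith [ih]

-- addition formula with Lucas numbers (ℕ)
lemma two_fib_add (a : ℕ) : ∀ b : ℕ, 2 * Nat.fib (a+b) =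
    lucasNum a * Nat.fib b + Nat.fib a * lucasNum b := by
  intro b
  induction b using Nat.twoStepInduction with
  | zero => simp [lucasNum, lucas_add_fib, Nat.mul_comm]
  | one => simpa [lucasNum] using (lucas_add_fib a).symm
  | more b ih1 ih2 =>
    have h1 : a + (b+2) = (a+b)+2 := by ring
    have h2 : a + (b+1) = (a+b)+1 := by ring
    rw [h1, Nat.fib_add_two, Nat.fib_add_two (n := b), lucas_add_two]
    rw [h2] at ih2
    ring_nf
    ring_nf at ih1 ih2
    omega
lemma fib_lucas_sub (t c : ℕ) : (Nat.fib (2*t+c) : ℤ) * lucasNum (2*t) =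
    lucasNum (2*t+c) * Nat.fib (2*t) + 2 * Nat.fib c := by
  have h1 : (lucasNum (2*t) : ℤ) + Nat.fib (2*t) = 2 * Nat.fib (2*t+1) :=
    by exact_mod_cast congrArg (Nat.cast : ℕ → ℤ) (lucas_add_fib (2*t))
  have h2 : (lucasNum (2*t+c) : ℤ) + Nat.fib (2*t+c) = 2 * Nat.fib (2*t+c+1) :=
    by exact_mod_cast congrArg (Nat.cast : ℕ → ℤ) (lucas_add_fib (2*t+c))
  have h3 := fib_sub c (2*t)
  rw [show ((-1:ℤ))^(2*t) = 1 by rw [pow_mul]; norm_num] at h3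
  linear_combination (Nat.fib (2*t+c) : ℤ) * h1 - (Nat.fib (2*t) : ℤ) * h2 + 2 * h3
lemma two_fib_plus (n : ℕ) : 2 * Nat.fib (n+2) = 3 * Nat.fib n + lucasNum n := by
  have h := lucas_add_fib n
  have f2 : Nat.fib (n+2) = Nat.fib n + Nat.fib (n+1) := Nat.fib_add_two
  omega

lemma two_lucas_plus (n : ℕ) : 2 * lucasNum (n+2) = 3 * lucasNum n + 5 * Nat.fib n := by
  have h0 := lucas_add_fib n
  have h1 := lucas_add_fib (n+1)
  rw [show n+1+1 = n+2 from rfl] at h1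
  have f2 : Nat.fib (n+2) = Nat.fib n + Nat.fib (n+1) := Nat.fib_add_two
  have r : lucasNum (n+2) = lucasNum (n+1) + lucasNum n := rfl
  omega

lemma gessel : ∀ x c : ℕ, c^2 = 5*x^2+4 → ∃ t, x = Nat.fib (2*t) ∧ c = lucasNum (2*t) := by
  intro x
  induction x using Nat.strong_induction_on with
  | _ x ih =>
    intro c hc
    match x, ih with
    | 0, _ =>
      have hc4 : c^2 = 2^2 := by omega
      have : c = 2 := Nat.pow_left_injective (by norm_num) hc4
      exact ⟨0, by simp [this, lucasNum]⟩
    | 1, _ =>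
      have hc9 : c^2 = 3^2 := by omega
      have : c = 3 := Nat.pow_left_injective (by norm_num) hc9
      exact ⟨1, by simp [this, lucasNum]⟩
    | (x+2), ih =>
      set X := x + 2 with hX
      have h2x : 2*X < c := by nlinarith
      have h3x : c < 3*X := by nlinarith
      have hpar : (c + X) % 2 = 0 := by
        have e1 : c ^ 2 % 2 = c % 2 := by
          rw [Nat.pow_mod]
          rcases (by omega : c % 2 = 0 ∨ c % 2 = 1) with h | h <;> rw [h] <;> norm_num
        have e2 : X ^ 2 % 2 = X % 2 := by
          rw [Nat.pow_mod]
          rcases (by omega : X % 2 = 0 ∨ X % 2 = 1) with h | h <;> rw [h] <;> norm_num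
        omega
      obtain ⟨a, ha⟩ : ∃ a, 3*X = c + 2*a := by
        refine ⟨(3*X - c)/2, ?_⟩; omega
      obtain ⟨b, hb⟩ : ∃ b, 3*c = 5*X + 2*b := by
        refine ⟨(3*c - 5*X)/2, ?_⟩; omega
      have hb2 : b^2 = 5*a^2 + 4 := by nlinarith
      have halt : a < X := by nlinarith
      obtain ⟨t, hta, htb⟩ := ih a halt b hb2
      refine ⟨t+1, ?_, ?_⟩
      · have h1 : 2 * Nat.fib (2*t+2) = 3 * Nat.fib (2*t) + lucasNum (2*t) := two_fib_plus (2*t)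
        have : 2*X = 3*a + b := by omega
        rw [show 2*(t+1) = 2*t+2 by ring]
        omega
      · have h1 := two_lucas_plus (2*t)
        have : 2*c = 5*a + 3*b := by omega
        rw [show 2*(t+1) = 2*t+2 by ring]
        omega
theorem stmt_14 (m : ℕ) (hm : 1 ≤ m) (n : ℕ) (hn : 0 < n)
    (hbig : (n : ℤ) > ((lucasNum (2 * m) : ℤ) + (Nat.fib (2 * m) : ℤ) ^ 2 + 1) ^ 3)
    (heq : ((ArithmeticFunction.sigma 2) n : ℤ) - (n : ℤ) ^ 2 =
      (lucasNum (2 * m) : ℤ) * n + (Nat.fib (2 * m) : ℤ) ^ 2 + 1) :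
    (∃ k : ℕ, n = Nat.fib (2 * k) * Nat.fib (2 * k + 2 * m) ∧
      (Nat.fib (2 * k)).Prime ∧ (Nat.fib (2 * k + 2 * m)).Prime) ∨
    (∃ k : ℕ, k < m ∧ m ≠ 2 * k ∧
      n = Nat.fib (2 * k) * Nat.fib (2 * m - 2 * k) ∧
      (Nat.fib (2 * k)).Prime ∧ (Nat.fib (2 * m - 2 * k)).Prime) := by
  set L := lucasNum (2 * m) with hLdef
  set F := Nat.fib (2 * m) with hFdef
  have hL3 : 3 ≤ L := lucas_even_ge_three hm
  have hF1 : 1 ≤ F := Nat.fib_pos.mpr (by omega)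
  set B : ℕ := L + F ^ 2 + 1 with hBdef
  have hnB : B ^ 3 < n := by
    have : ((B : ℤ)) ^ 3 < (n : ℤ) := by push_cast; exact hbig
    exact_mod_cast this
  have hn125 : 125 < n := by
    have h5 : 5 ≤ B := by nlinarith
    have : 5 ^ 3 ≤ B ^ 3 := Nat.pow_le_pow_left h5 3
    omega
  -- sum of squares of proper divisors
  set S : ℕ := ∑ d ∈ n.properDivisors, d ^ 2 with hSdef
  have hσ : (ArithmeticFunction.sigma 2) n = n ^ 2 + S := by
    rw [ArithmeticFunction.sigma_apply, ← Nat.insert_self_properDivisors hn.ne',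
      Finset.sum_insert Nat.self_notMem_properDivisors]
  have hSn : S = L * n + F ^ 2 + 1 := by
    have : (S : ℤ) = L * n + F ^ 2 + 1 := by
      rw [hσ] at heq; push_cast at heq ⊢; linarith
    exact_mod_cast this
  clear_value L F B S
  have hLn : 3 * n ≤ L * n := Nat.mul_le_mul_right n hL3
  -- n is not prime
  have hnp : ¬ n.Prime := by
    intro hprime
    have : S = 1 := by rw [hSdef, hprime.properDivisors]; simp
    omega
  have hn1 : n ≠ 1 := by omega
  set p := n.minFac with hpdef
  have hp : p.Prime := Nat.minFac_prime hn1
  set q := n / p with hqdef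
  have hpq : p * q = n := Nat.mul_div_cancel' (Nat.minFac_dvd n)
  clear_value p q
  have hq1 : q ≠ 1 := by
    intro h; rw [h, mul_one] at hpq; rw [← hpq] at hnp; exact hnp hp
  have hq0 : 0 < q := by
    rcases Nat.eq_zero_or_pos q with h | h
    · rw [h, mul_zero] at hpq; omega
    · exact h
  have hqn : q < n := by nlinarith [hp.two_le]
  have hqdvd : q ∣ n := ⟨p, by rw [← hpq]; ring⟩
  have hq_mem : q ∈ n.properDivisors := Nat.mem_properDivisors.mpr ⟨hqdvd, hqn⟩
  have h1_mem : (1 : ℕ) ∈ n.properDivisors :=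
    Nat.one_mem_properDivisors_iff_one_lt.mpr (by omega)
  have hq2S : 1 + q ^ 2 ≤ S := by
    have hsub : ({1, q} : Finset ℕ) ⊆ n.properDivisors := by
      intro d hd
      simp only [Finset.mem_insert, Finset.mem_singleton] at hd
      rcases hd with rfl | rfl
      · exact h1_mem
      · exact hq_mem
    have := Finset.sum_le_sum_of_subset (f := fun d => d ^ 2) hsub
    rw [Finset.sum_insert (by simpa using (Ne.symm hq1)), Finset.sum_singleton,
      one_pow] at this
    rw [hSdef]
    exact this
  have hq2 : q ^ 2 ≤ L * n + F ^ 2 := by omega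
  by_cases hpe : p = q
  · -- n = p^2 : contradiction
    exfalso
    have hn2eq : n = p ^ 2 := by rw [← hpq, hpe]; ring
    have hsub2 : n.properDivisors ⊆ ({1, p} : Finset ℕ) := by
      intro d hd
      rw [Nat.mem_properDivisors] at hd
      obtain ⟨i, hi, rfl⟩ := (Nat.dvd_prime_pow hp).mp (hn2eq ▸ hd.1)
      interval_cases i
      · simp
      · simp
      · exfalso; rw [← hn2eq] at hd; exact absurd hd.2 (lt_irrefl n)
    have hSle : S ≤ 1 + p ^ 2 := by
      have := Finset.sum_le_sum_of_subset (f := fun d => d ^ 2) hsub2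
      rw [Finset.sum_insert (by simpa using (Ne.symm hp.ne_one)), Finset.sum_singleton,
        one_pow] at this
      rw [hSdef]
      exact this
    have : p ^ 2 = n := hn2eq.symm
    omega
  · -- n = p * q with p < q both prime
    have hq : q.Prime := by
      by_contra hqp
      obtain ⟨K, hKdef⟩ : ∃ K : ℕ, K = L + F ^ 2 := ⟨_, rfl⟩
      have hr2 : q.minFac ^ 2 ≤ q := Nat.minFac_sq_le_self hq0 hqp
      have hrp : p ≤ q.minFac := by
        rw [hpdef]
        exact Nat.minFac_le_of_dvd (Nat.minFac_prime hq1).two_le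
          ((Nat.minFac_dvd q).trans hqdvd)
      have hp2q : p ^ 2 ≤ q := le_trans (Nat.pow_le_pow_left hrp 2) hr2
      have hFn : F ^ 2 ≤ F ^ 2 * n := Nat.le_mul_of_pos_right _ hn
      have hqq : q * q ≤ (K * p) * q := by
        have h1 : q ^ 2 ≤ L * n + F ^ 2 * n :=
          le_trans hq2 (Nat.add_le_add_left hFn (L * n))
        have h2 : L * n + F ^ 2 * n = ((K * p) * q) := by
          rw [← hpq, hKdef]; ring
        calc q * q = q ^ 2 := by ring
          _ ≤ L * n + F ^ 2 * n := h1
          _ = (K * p) * q := h2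
      have hqKp : q ≤ K * p := Nat.le_of_mul_le_mul_right hqq hq0
      have hpK : p ≤ K := by
        have hppKp : p * p ≤ K * p :=
          calc p * p = p ^ 2 := by ring
            _ ≤ q := hp2q
            _ ≤ K * p := hqKp
        exact Nat.le_of_mul_le_mul_right hppKp (lt_of_lt_of_le two_pos hp.two_le)
      have hnK : n ≤ K ^ 3 := by
        calc n = p * q := hpq.symm
          _ ≤ K * (K * K) := Nat.mul_le_mul hpK (le_trans hqKp (Nat.mul_le_mul_left K hpK))
          _ = K ^ 3 := by ring
      have hKB : K ^ 3 < B ^ 3 := Nat.pow_lt_pow_left (by omega) (by norm_num)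
      omega
    have hple : p ≤ q := by
      rw [hpdef]; exact Nat.minFac_le_of_dvd hq.two_le hqdvd
    have hplt : p < q := lt_of_le_of_ne hple hpe
    have hcop : Nat.Coprime p q := (Nat.coprime_primes hp hq).mpr hpe
    have hσp : (ArithmeticFunction.sigma 2) p = 1 + p ^ 2 := by
      rw [ArithmeticFunction.sigma_apply, hp.divisors,
        Finset.sum_insert (by simpa using (Ne.symm hp.ne_one)), Finset.sum_singleton, one_pow]
    have hσq : (ArithmeticFunction.sigma 2) q = 1 + q ^ 2 := by
      rw [ArithmeticFunction.sigma_apply, hq.divisors,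
        Finset.sum_insert (by simpa using (Ne.symm hq.ne_one)), Finset.sum_singleton, one_pow]
    have hσmul : (ArithmeticFunction.sigma 2) n = (1 + p ^ 2) * (1 + q ^ 2) := by
      rw [← hpq, ArithmeticFunction.isMultiplicative_sigma.map_mul_of_coprime hcop, hσp, hσq]
    have key : (p : ℤ) ^ 2 + (q : ℤ) ^ 2 = (L : ℤ) * p * q + (F : ℤ) ^ 2 := by
      rw [hσmul] at heq
      rw [← hpq] at heq
      push_cast at heq
      linarith [heq]
    have hL2 : (L : ℤ) ^ 2 = 5 * (F : ℤ) ^ 2 + 4 := by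
      rw [hLdef, hFdef]; exact lucas_sq_even m
    have hD : (2 * (q : ℤ) - L * p) ^ 2 = (F : ℤ) ^ 2 * (5 * (p:ℤ) ^ 2 + 4) := by
      linear_combination 4 * key + (p : ℤ) ^ 2 * hL2
    have hF0 : (F : ℤ) ≠ 0 := by
      have : (0:ℤ) < F := by exact_mod_cast (by omega : 0 < F)
      omega
    have hFd : (F : ℤ) ∣ (2 * (q : ℤ) - L * p) := by
      refine (Int.pow_dvd_pow_iff (two_ne_zero)).mp ?_
      exact ⟨5 * (p:ℤ) ^ 2 + 4, hD⟩
    obtain ⟨e, he⟩ := hFd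
    have he2 : e ^ 2 = 5 * (p : ℤ) ^ 2 + 4 := by
      have h' : (F:ℤ) ^ 2 * e ^ 2 = (F:ℤ) ^ 2 * (5 * (p:ℤ) ^ 2 + 4) := by
        rw [← hD, he]; ring
      exact mul_left_cancel₀ (pow_ne_zero 2 hF0) h'
    set E := e.natAbs with hEdef
    have hEn : E ^ 2 = 5 * p ^ 2 + 4 := by
      have hcast : ((E ^ 2 : ℕ) : ℤ) = 5 * (p:ℤ) ^ 2 + 4 := by
        push_cast
        rw [← Int.abs_eq_natAbs, sq_abs]
        exact he2
      exact_mod_cast hcast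
    obtain ⟨t, hpt, hEt⟩ := gessel p E hEn
    have hq2' : 2 ≤ q := hq.two_le
    have hadd := two_fib_add (2*m) (2*t)
    rw [← hLdef, ← hFdef] at hadd
    rcases Int.natAbs_eq e with hee | hee <;> rw [← hEdef] at hee
    · -- e = E : q = fib (2t + 2m)
      left
      have h2q : 2 * (q:ℤ) = (L:ℤ) * Nat.fib (2*t) + (F:ℤ) * lucasNum (2*t) := by
        rw [← hpt, ← hEt]
        have : (2 * (q : ℤ) - L * p) = F * E := by rw [he, ← hee]
        push_cast at this ⊢
        linarith
      have hqfib : (q : ℤ) = Nat.fib (2*m + 2*t) := by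
        have hadd' : (2 * Nat.fib (2*m + 2*t) : ℤ) =
            (L:ℤ) * Nat.fib (2*t) + (F:ℤ) * lucasNum (2*t) := by
          exact_mod_cast hadd
        linarith only [hadd', h2q]
      have hqfib' : q = Nat.fib (2*t + 2*m) := by
        rw [Nat.add_comm (2*t) (2*m)]; exact_mod_cast hqfib
      exact ⟨t, by rw [← hpq, hpt, hqfib'], by rw [← hpt]; exact hp, by rw [← hqfib']; exact hq⟩
    · -- e = -E
      exfalso
      have h2q : 2 * (q:ℤ) + (F:ℤ) * lucasNum (2*t) = (L:ℤ) * Nat.fib (2*t) := by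
        rw [← hpt, ← hEt]
        have : (2 * (q : ℤ) - L * p) = - (F * E) := by rw [he, hee]; ring
        push_cast at this ⊢
        linarith
      rcases le_or_gt t m with htm | htm
      · have hid := fib_lucas_sub t (2*m - 2*t)
        rw [show 2*t + (2*m - 2*t) = 2*m by omega, ← hLdef, ← hFdef] at hid
        have hfib0 : (0:ℤ) ≤ Nat.fib (2*m - 2*t) := by positivity
        have hqle : 2 * (q:ℤ) ≤ 0 := by linarith only [hid, h2q, hfib0]
        have hqge : (2:ℤ) ≤ q := by exact_mod_cast hq2'
        omega
      · have hid := fib_lucas_sub m (2*t - 2*m)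
        rw [show 2*m + (2*t - 2*m) = 2*t by omega, ← hLdef, ← hFdef] at hid
        have hqval : (q : ℤ) = Nat.fib (2*t - 2*m) := by
          linarith only [hid, h2q]
        have hqn' : q = Nat.fib (2*t - 2*m) := by exact_mod_cast hqval
        have : Nat.fib (2*t - 2*m) ≤ Nat.fib (2*t) := Nat.fib_mono (by omega)
        rw [← hpt] at this
        omega
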